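/- The operators Q(s_a) := s_a - k_a I(a) on real-analytic functions on V̂⁺, where s_a acts by (s_a f)(v̂) = f(s_a v̂) and I(a) is the integral-reflection operator, satisfy Q(s_a)² = Id for each affine root a. -/

import Mathlib

open scoped RealInnerProductSpace

/- V̂ = V ⊕ ℝc ⊕ ℝd modeled as `V × ℝ × ℝ`. -/

/-- The bilinear form on V̂ extending the inner product by (c,d)=1, (c,c)=(d,d)=0. -/
noncomputable def BhatV {V : Type*} [NormedAddCommGroup V] [InnerProductSpace ℝ V]
    (p q : V × ℝ × ℝ) : ℝ :=
  ⟪p.1, q.1⟫ + p.2.1 * q.2.2 + p.2.2 * q.2.1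

/-- Reflection s_a(v̂) = v̂ - (v̂, a∨)a, a∨ = (2/(a,a))a. -/
noncomputable def srefV {V : Type*} [NormedAddCommGroup V] [InnerProductSpace ℝ V]
    (a : V × ℝ × ℝ) (p : V × ℝ × ℝ) : V × ℝ × ℝ :=
  p - ((2 / BhatV a a) * BhatV p a) • a

/-- The operator Q(s_a) = s_a - k_a I(a):
(Q(s_a)f)(v̂) = f(s_a v̂) - k_a ∫₀^{(a,v̂)} f(v̂ - t a∨) dt. -/
noncomputable def Qop {V : Type*} [NormedAddCommGroup V] [InnerProductSpace ℝ V]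
    (a : V × ℝ × ℝ) (k : ℂ) (f : V × ℝ × ℝ → ℂ) (v : V × ℝ × ℝ) : ℂ :=
  f (srefV a v) - k * ∫ t in (0:ℝ)..(BhatV a v), f (v - t • ((2 / BhatV a a) • a))

section Aux

variable {V : Type*} [NormedAddCommGroup V] [InnerProductSpace ℝ V]

lemma Bhat_symm (p q : V × ℝ × ℝ) : BhatV p q = BhatV q p := by
  simp [BhatV, real_inner_comm]; ring

lemma Bhat_sub_left (p q r : V × ℝ × ℝ) : BhatV (p - q) r = BhatV p r - BhatV q r := by
  simp [BhatV, inner_sub_left]; ring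

lemma Bhat_smul_left (t : ℝ) (p q : V × ℝ × ℝ) : BhatV (t • p) q = t * BhatV p q := by
  simp [BhatV, real_inner_smul_left]; ring

/-- pairing with a along the line. -/
lemma Bhat_line (a : V × ℝ × ℝ) (ha : BhatV a a ≠ 0) (v : V × ℝ × ℝ) (t : ℝ) :
    BhatV a (v - t • ((2 / BhatV a a) • a)) = BhatV a v - 2 * t := by
  rw [Bhat_symm, Bhat_sub_left, Bhat_smul_left, Bhat_smul_left, Bhat_symm v a]
  field_simp

/-- reflection along the line. -/
lemma sref_line (a : V × ℝ × ℝ) (ha : BhatV a a ≠ 0) (v : V × ℝ × ℝ) (t : ℝ) :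
    srefV a (v - t • ((2 / BhatV a a) • a)) =
      v - (BhatV a v - t) • ((2 / BhatV a a) • a) := by
  have hBa : BhatV (v - t • ((2 / BhatV a a) • a)) a = BhatV a v - 2 * t := by
    rw [Bhat_symm]; exact Bhat_line a ha v t
  rw [srefV, hBa]
  rw [smul_smul, ← mul_smul]
  rw [sub_sub, ← add_smul]
  congr 1
  ring

lemma sref_eq (a : V × ℝ × ℝ) (ha : BhatV a a ≠ 0) (v : V × ℝ × ℝ) :
    srefV a v = v - (BhatV a v) • ((2 / BhatV a a) • a) := by
  have h := sref_line a ha v 0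
  simpa using h

lemma line_line (a v : V × ℝ × ℝ) (t u : ℝ) :
    (v - t • ((2 / BhatV a a) • a)) - u • ((2 / BhatV a a) • a)
      = v - (t + u) • ((2 / BhatV a a) • a) := by
  rw [add_smul]; abel

end Aux

theorem stmt13 {V : Type*} [NormedAddCommGroup V] [InnerProductSpace ℝ V]
    (a : V × ℝ × ℝ) (ha : BhatV a a ≠ 0) (k : ℂ)
    (f : V × ℝ × ℝ → ℂ) (hf : Continuous f) :
    ∀ v : V × ℝ × ℝ, Qop a k (Qop a k f) v = f v := by
  intro v
  set c : ℝ := BhatV a v with hc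
  set g : ℝ → ℂ := fun t => f (v - t • ((2 / BhatV a a) • a)) with hg
  have hgcont : Continuous g :=
    hf.comp (continuous_const.sub (continuous_id.smul continuous_const))
  have hgint : ∀ x y : ℝ, IntervalIntegrable g MeasureTheory.volume x y :=
    fun x y => hgcont.intervalIntegrable x y
  -- value of Qop f at points on the line
  have hQline : ∀ t : ℝ, Qop a k f (v - t • ((2 / BhatV a a) • a)) =
      g (c - t) - k * ∫ u in t..(c - t), g u := by
    intro t
    rw [Qop, sref_line a ha v t, Bhat_line a ha v t, ← hc]
    have h2 : (∫ u in (0:ℝ)..(c - 2 * t), f (v - t • ((2 / BhatV a a) • a)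
        - u • ((2 / BhatV a a) • a))) = ∫ u in t..(c - t), g u := by
      have h1 : ∀ u : ℝ, f (v - t • ((2 / BhatV a a) • a) - u • ((2 / BhatV a a) • a))
          = g (t + u) := by
        intro u; rw [hg, line_line a v t u]
      simp only [h1]
      rw [intervalIntegral.integral_comp_add_left g t]
      have h5 : t + (c - 2 * t) = c - t := by ring
      rw [h5, add_zero]
    rw [h2, hg]
  -- value of Qop f at srefV a v
  have hQs : Qop a k f (srefV a v) = f v + k * ∫ u in (0:ℝ)..c, g u := by
    rw [sref_eq a ha v, ← hc, hQline c]
    have h0 : c - c = 0 := sub_self c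
    rw [h0]
    rw [intervalIntegral.integral_symm 0 c]
    have : g 0 = f v := by rw [hg]; simp
    rw [this]
    ring
  -- the double integral vanishes
  set H : ℝ → ℂ := fun t => ∫ u in t..(c - t), g u with hHdef
  have hHasP : ∀ t : ℝ, H t = (∫ u in (0:ℝ)..(c - t), g u) - ∫ u in (0:ℝ)..t, g u := by
    intro t
    rw [hHdef]
    exact (intervalIntegral.integral_interval_sub_left (hgint 0 (c - t)) (hgint 0 t)).symm
  have hP : Continuous fun x : ℝ => ∫ u in (0:ℝ)..x, g u :=
    intervalIntegral.continuous_primitive hgint 0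
  have hHcont : Continuous H := by
    have h3 : Continuous fun t : ℝ => (∫ u in (0:ℝ)..(c - t), g u) - ∫ u in (0:ℝ)..t, g u :=
      (hP.comp (continuous_const.sub continuous_id)).sub hP
    exact (continuous_congr (fun t => (hHasP t).symm)).mp h3
  have hHzero : (∫ t in (0:ℝ)..c, H t) = 0 := by
    have hsym : (∫ t in (0:ℝ)..c, H (c - t)) = ∫ t in (0:ℝ)..c, H t := by
      rw [intervalIntegral.integral_comp_sub_left H c]
      norm_num
    have hneg : ∀ t : ℝ, H (c - t) = - H t := by
      intro t
      rw [hHdef]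
      simp only [sub_sub_cancel]
      exact intervalIntegral.integral_symm t (c - t)
    rw [intervalIntegral.integral_congr (fun t _ => hneg t)] at hsym
    rw [intervalIntegral.integral_neg] at hsym
    have h4 := sub_eq_zero.mpr hsym.symm
    rw [sub_neg_eq_add] at h4
    linear_combination h4 / 2
  -- put it all together
  rw [Qop, hQs, ← hc]
  have hcont1 : Continuous fun t : ℝ => g (c - t) :=
    hgcont.comp (continuous_const.sub continuous_id)
  have hint2 : (∫ t in (0:ℝ)..c, Qop a k f (v - t • ((2 / BhatV a a) • a)))
      = (∫ t in (0:ℝ)..c, g (c - t)) - k * ∫ t in (0:ℝ)..c, H t := by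
    rw [intervalIntegral.integral_congr (fun t _ => hQline t)]
    rw [intervalIntegral.integral_sub (hcont1.intervalIntegrable 0 c)
      ((hHcont.intervalIntegrable 0 c).const_mul k)]
    rw [intervalIntegral.integral_const_mul]
  rw [hint2, hHzero]
  have hflip : (∫ t in (0:ℝ)..c, g (c - t)) = ∫ t in (0:ℝ)..c, g t := by
    rw [intervalIntegral.integral_comp_sub_left g c]
    norm_num
  rw [hflip]
  ring
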